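/- Let S be a numerical semigroup and let d be a nonzero element of S. Then there exists a matrix A ∈ M_d(ℚ) such that S(A) = S. In particular, the matricial dimension of S is at most the multiplicity m(S) = min(S \ {0}). -/

import Mathlib

/-- The exponent set of a rational square matrix: those `n` with the `n`-th power integral. -/
def expSet {ι : Type*} [Fintype ι] [DecidableEq ι] (A : Matrix ι ι ℚ) : Set ℕ :=
  {n | ∀ i j, ((A ^ n) i j).den = 1}

/-- The matricial dimension of a set `S ⊆ ℕ`. -/
noncomputable def matricialDim (S : Set ℕ) : ℕ :=
  sInf {d | ∃ A : Matrix (Fin d) (Fin d) ℚ, expSet A = S}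

lemma den_two_zpow (z : ℤ) : ((2:ℚ) ^ z).den = 1 ↔ 0 ≤ z := by
  constructor
  · intro h
    by_contra hz
    push_neg at hz
    have h1 : (2:ℚ) ^ z < 1 := zpow_lt_one_of_neg₀ (by norm_num) hz
    have h0 : (0:ℚ) < (2:ℚ) ^ z := zpow_pos (by norm_num) z
    have hint : (((2:ℚ)^z).num : ℚ) = (2:ℚ)^z := by
      exact_mod_cast Rat.den_eq_one_iff _ |>.mp h
    have : (1:ℚ) ≤ ((2:ℚ)^z).num := by
      have : 0 < ((2:ℚ)^z).num := Rat.num_pos.mpr h0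
      exact_mod_cast this
    linarith [hint ▸ this]
  · intro h
    obtain ⟨n, rfl⟩ := Int.eq_ofNat_of_zero_le h
    rw [zpow_natCast, show (2:ℚ)^n = ((2^n : ℤ) : ℚ) by push_cast; ring]
    exact Rat.den_intCast _

open Fin.NatCast in
lemma cyc_pow {d : ℕ} [NeZero d] (w : Fin d → ℕ) (n : ℕ) :
    (Matrix.of fun i j : Fin d => if j = i + 1 then (2:ℚ)^((1:ℤ) + w i - w j) else 0) ^ n
    = Matrix.of fun i j : Fin d =>
        if j = i + (n : Fin d) then (2:ℚ)^((n:ℤ) + w i - w j) else 0 := by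
  induction n with
  | zero =>
    ext i j
    simp only [Matrix.of_apply, Nat.cast_zero, add_zero, Matrix.one_apply, pow_zero]
    rcases eq_or_ne j i with rfl | h
    · simp
    · simp [h, h.symm]
  | succ n ih =>
    rw [pow_succ, ih]
    ext i j
    rw [Matrix.mul_apply]
    simp only [Matrix.of_apply, ite_mul, zero_mul]
    rw [Finset.sum_ite_eq' Finset.univ (i + (n : Fin d))]
    simp only [Finset.mem_univ, if_true, mul_ite, mul_zero]
    by_cases hj : j = i + (n : Fin d) + 1
    · rw [if_pos hj, if_pos (by rw [hj]; rw [Nat.cast_succ, add_assoc])]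
      rw [← zpow_add₀ (by norm_num : (2:ℚ) ≠ 0)]
      congr 1
      push_cast
      ring
    · rw [if_neg hj, if_neg (by intro h; apply hj; rw [h]; rw [Nat.cast_succ, add_assoc])]

open Fin.NatCast in
lemma rep_matrix (S : AddSubmonoid ℕ) (hS : (↑S : Set ℕ)ᶜ.Finite) (d : ℕ)
    (hd : d ∈ S) (hd0 : d ≠ 0) :
    ∃ A : Matrix (Fin d) (Fin d) ℚ, expSet A = (S : Set ℕ) := by
  haveI : NeZero d := ⟨hd0⟩
  obtain ⟨N, hN⟩ := hS.bddAbove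
  have hbig : ∀ n : ℕ, N < n → n ∈ S := by
    intro n hn
    by_contra hns
    exact absurd (hN hns) (not_le.mpr hn)
  set W : Fin d → Set ℕ := fun i => {s | s ∈ S ∧ s % d = i.val} with hW
  have hne : ∀ i, (W i).Nonempty := by
    intro i
    refine ⟨i.val + d * (N + 1), hbig _ ?_, by simp [Nat.add_mul_mod_self_left,
      Nat.mod_eq_of_lt i.isLt]⟩
    have hd1 : 1 ≤ d := Nat.one_le_iff_ne_zero.mpr hd0
    calc N < N + 1 := Nat.lt_succ_self N
      _ ≤ d * (N + 1) := Nat.le_mul_of_pos_left _ hd1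
      _ ≤ i.val + d * (N + 1) := Nat.le_add_left _ _
  set w : Fin d → ℕ := fun i => sInf (W i) with hwdef
  have hw : ∀ i, w i ∈ S ∧ w i % d = i.val := fun i => Nat.sInf_mem (hne i)
  have hw0 : w 0 = 0 := by
    have : w 0 ≤ 0 := Nat.sInf_le ⟨S.zero_mem, by simp⟩
    omega
  refine ⟨Matrix.of fun i j : Fin d => if j = i + 1 then (2:ℚ)^((1:ℤ) + w i - w j) else 0, ?_⟩
  ext n
  rw [expSet, Set.mem_setOf]
  simp only [cyc_pow w n, Matrix.of_apply]
  constructor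
  · intro h
    have h0 := h 0 ((n : Fin d))
    rw [if_pos (zero_add ((n : Fin d))).symm, den_two_zpow, hw0] at h0
    set m := w ((n : Fin d)) with hm
    have hle : m ≤ n := by
      have : (m : ℤ) ≤ (n : ℤ) := by push_cast at h0 ⊢; linarith
      exact_mod_cast this
    have hmS : m ∈ S := (hw _).1
    have hmod : m % d = n % d := by
      have := (hw ((n : Fin d))).2
      rwa [Fin.val_natCast] at this
    have hdvd : d ∣ n - m := (Nat.modEq_iff_dvd' hle).mp hmod
    obtain ⟨k, hk⟩ := hdvd
    have hn : n = m + d * k := by omega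
    rw [hn]
    exact S.add_mem hmS (by simpa [smul_eq_mul, mul_comm] using S.nsmul_mem hd k)
  · intro hn i j
    split_ifs with hj
    · rw [den_two_zpow]
      have hmem : n + w i ∈ W j := by
        refine ⟨S.add_mem hn (hw i).1, ?_⟩
        rw [hj]
        have : (i + (n : Fin d)).val = (i.val + n % d) % d := by
          rw [Fin.add_def, Fin.val_natCast]
        rw [this, Nat.add_mod, (hw i).2, Nat.add_comm]
      have : w j ≤ n + w i := Nat.sInf_le hmem
      have : (w j : ℤ) ≤ (n : ℤ) + w i := by exact_mod_cast this
      linarith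
    · simp

theorem exists_representing_matrix (S : AddSubmonoid ℕ)
    (hS : (↑S : Set ℕ)ᶜ.Finite) (d : ℕ) (hd : d ∈ S) (hd0 : d ≠ 0) :
    (∃ A : Matrix (Fin d) (Fin d) ℚ, expSet A = (S : Set ℕ)) ∧
    matricialDim (S : Set ℕ) ≤ sInf {n : ℕ | n ∈ S ∧ n ≠ 0} := by
  refine ⟨rep_matrix S hS d hd hd0, ?_⟩
  obtain ⟨N, hN⟩ := hS.bddAbove
  have hT : (N + 1) ∈ {n : ℕ | n ∈ S ∧ n ≠ 0} := by
    refine ⟨?_, Nat.succ_ne_zero N⟩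
    by_contra hns
    exact absurd (hN hns) (by omega)
  have hm := Nat.sInf_mem ⟨N + 1, hT⟩
  exact Nat.sInf_le (rep_matrix S hS _ hm.1 hm.2)
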